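/- In a binary matroid, if C1 and C2 are circuits with C1 ∩ C2 nonempty, |C1| odd and |C1 \ C2| odd, and C1 ∪ C2 is inclusion-wise minimal among all such pairs, then the only circuits of the restriction of the matroid to C1 ∪ C2 are C1, C2 and the symmetric difference C1 Δ C2. -/

import Mathlib

variable {α : Type*}

/-- `C` is a circuit of the matroid `M`: a minimal dependent set. -/
def MCircuit (M : Matroid α) (C : Set α) : Prop :=
  M.Dep C ∧ ∀ D ⊂ C, ¬ M.Dep D

/-- `X` is a cycle of `M`: a disjoint union of circuits. -/
def IsCycleM (M : Matroid α) (X : Set α) : Prop :=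
  ∃ S : Finset (Set α), (∀ C ∈ S, MCircuit M C) ∧
    (S : Set (Set α)).Pairwise Disjoint ∧ X = ⋃ C ∈ S, C

/-- `M` is binary: the symmetric difference of any two circuits is a disjoint
union of circuits. -/
def BinaryM (M : Matroid α) : Prop :=
  ∀ C1 C2, MCircuit M C1 → MCircuit M C2 → IsCycleM M (symmDiff C1 C2)

/-- `M` is connected: at least two elements, and any two elements lie on a
common circuit. -/
def ConnectedM (M : Matroid α) : Prop :=
  2 ≤ M.E.ncard ∧ ∀ a ∈ M.E, ∀ b ∈ M.E, a ≠ b →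
    ∃ C, MCircuit M C ∧ a ∈ C ∧ b ∈ C

/-- the cycle space of a binary matroid: the `𝔽₂`-span of indicator vectors of
circuits -/
def cycleSpaceM (M : Matroid α) : Submodule (ZMod 2) (α → ZMod 2) :=
  Submodule.span (ZMod 2)
    {x | ∃ C, MCircuit M C ∧ x = Set.indicator C (1 : α → ZMod 2)}

/-- `B` is a cycle basis of `M`: a family of cycles whose indicator vectors
form a basis of the cycle space. -/
def IsCycleBasisM (M : Matroid α) (B : Finset (Set α)) : Prop :=
  (∀ C ∈ B, IsCycleM M C) ∧
  LinearIndependent (ZMod 2)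
    (fun C : B => Set.indicator C.1 (1 : α → ZMod 2)) ∧
  Submodule.span (ZMod 2)
    ((fun C => Set.indicator C (1 : α → ZMod 2)) '' (B : Set (Set α))) = cycleSpaceM M


lemma MCircuit.eq_of_subset {M : Matroid α} {C D : Set α}
    (hC : MCircuit M C) (hD : MCircuit M D) (h : D ⊆ C) : D = C := by
  by_contra hne
  exact hC.2 D (ssubset_of_subset_of_ne h hne) hD.1

lemma cycle_eq_circuit_of_subset {M : Matroid α} {X C : Set α}
    (hX : IsCycleM M X) (hne : X.Nonempty) (hC : MCircuit M C) (hXC : X ⊆ C) : X = C := by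
  obtain ⟨S, hS, -, rfl⟩ := hX
  obtain ⟨x, hx⟩ := hne
  simp only [Set.mem_iUnion] at hx
  obtain ⟨D, hDS, hxD⟩ := hx
  have hsub : D ⊆ ⋃ C ∈ S, C := fun y hy => Set.mem_biUnion hDS hy
  have hDC : D = C := (hC.eq_of_subset (hS D hDS) (hsub.trans hXC))
  exact subset_antisymm hXC (hDC ▸ hsub)

open Classical in
lemma ncard_partition_sum (T : Finset (Set α)) (hdisj : (T : Set (Set α)).Pairwise Disjoint)
    (X : Set α) (hX : X ⊆ ⋃ D ∈ T, D) (hfin : X.Finite) :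
    X.ncard = ∑ D ∈ T, (X ∩ D).ncard := by
  classical
  induction T using Finset.induction generalizing X with
  | empty => simp at hX; simp [hX]
  | @insert a s ha ih =>
    rw [Finset.sum_insert ha]
    have hdisj' : (s : Set (Set α)).Pairwise Disjoint := by
      refine hdisj.mono ?_; simp [Set.subset_insert]
    have hXa : (X \ a) ⊆ ⋃ D ∈ s, D := by
      intro x hx
      have := hX hx.1
      simp only [Finset.mem_insert, Set.mem_iUnion] at this ⊢
      obtain ⟨D, hD, hxD⟩ := this
      rcases hD with rfl | hD
      · exact absurd hxD hx.2
      · exact ⟨D, hD, hxD⟩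
    have hrec := ih hdisj' (X \ a) hXa hfin.diff
    have hsplit : (X ∩ a).ncard + (X \ a).ncard = X.ncard :=
      Set.ncard_inter_add_ncard_diff_eq_ncard X a hfin
    have hterms : ∀ D ∈ s, ((X \ a) ∩ D).ncard = (X ∩ D).ncard := by
      intro D hD
      have hDa : Disjoint a D := hdisj (by simp) (by simp [hD]) (fun h => ha (h ▸ hD))
      congr 1
      ext x
      simp only [Set.mem_inter_iff, Set.mem_diff]
      exact ⟨fun ⟨⟨h1, _⟩, h2⟩ => ⟨h1, h2⟩,
        fun ⟨h1, h2⟩ => ⟨⟨h1, fun hxa => hDa.ne_of_mem hxa h2 rfl⟩, h2⟩⟩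
    rw [Finset.sum_congr rfl hterms] at hrec
    omega

open Classical in
lemma sum_mod_two {β : Type*} (T : Finset β) (f : β → ℕ) :
    (∑ x ∈ T, f x) % 2 = (T.filter (fun x => f x % 2 = 1)).card % 2 := by
  classical
  induction T using Finset.induction with
  | empty => simp
  | @insert a s ha ih =>
    rw [Finset.sum_insert ha, Finset.filter_insert]
    by_cases hfa : f a % 2 = 1
    · rw [if_pos hfa, Finset.card_insert_of_notMem (by simp [ha])]
      omega
    · rw [if_neg hfa]
      omega


open scoped Matroid

/-- in a binary matroid, for a minimal pair of circuits `C1, C2`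
with nonempty intersection, `|C1|` odd and `|C1 \ C2|` odd, the only circuits
of the restriction to `C1 ∪ C2` are `C1`, `C2` and `C1 Δ C2`. -/
theorem stmt5 {α : Type*} (M : Matroid α) [M.Finite] (hbin : BinaryM M)
    (C1 C2 : Set α) (h1 : MCircuit M C1) (h2 : MCircuit M C2)
    (hne : (C1 ∩ C2).Nonempty) (ho1 : Odd C1.ncard) (ho2 : Odd (C1 \ C2).ncard)
    (hmin : ∀ D1 D2 : Set α, MCircuit M D1 → MCircuit M D2 →
      (D1 ∩ D2).Nonempty → Odd D1.ncard → Odd (D1 \ D2).ncard →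
      D1 ∪ D2 ⊆ C1 ∪ C2 → D1 ∪ D2 = C1 ∪ C2) :
    ∀ C : Set α, MCircuit (M ↾ (C1 ∪ C2)) C ↔
      (C = C1 ∨ C = C2 ∨ C = symmDiff C1 C2) := by
  classical
  have hU : C1 ∪ C2 ⊆ M.E := Set.union_subset h1.1.subset_ground h2.1.subset_ground
  have hUfin : (C1 ∪ C2).Finite := M.set_finite _ hU
  have hfin : ∀ X : Set α, X ⊆ C1 ∪ C2 → X.Finite := fun X hX => hUfin.subset hX
  have h1fin : C1.Finite := hfin _ Set.subset_union_left
  have h2fin : C2.Finite := hfin _ Set.subset_union_right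
  -- circuits of the restriction are circuits of M inside C1 ∪ C2
  have hrestr : ∀ C : Set α, MCircuit (M ↾ (C1 ∪ C2)) C ↔ MCircuit M C ∧ C ⊆ C1 ∪ C2 := by
    intro C
    constructor
    · intro hC
      have hCU : C ⊆ C1 ∪ C2 := by
        have := hC.1.subset_ground
        rwa [Matroid.restrict_ground_eq] at this
      have hdep : M.Dep C := by
        have := Matroid.restrict_dep_iff.mp hC.1
        exact ⟨this.1, hCU.trans hU⟩
      refine ⟨⟨hdep, ?_⟩, hCU⟩
      intro D hD hDdep
      exact hC.2 D hD (Matroid.restrict_dep_iff.mpr ⟨hDdep.not_indep, hD.subset.trans hCU⟩)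
    · rintro ⟨hC, hCU⟩
      refine ⟨Matroid.restrict_dep_iff.mpr ⟨hC.1.not_indep, hCU⟩, ?_⟩
      intro D hD hDdep
      have := Matroid.restrict_dep_iff.mp hDdep
      exact hC.2 D hD ⟨this.1, this.2.trans hU⟩
  -- basic facts
  have nonempty_of_odd : ∀ X : Set α, X.ncard % 2 = 1 → X.Nonempty := by
    intro X hX
    exact Set.nonempty_of_ncard_ne_zero (by omega)
  have hC1mod : C1.ncard % 2 = 1 := Nat.odd_iff.mp ho1
  have hAmod : (C1 \ C2).ncard % 2 = 1 := Nat.odd_iff.mp ho2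
  have hsplit1 : (C1 ∩ C2).ncard + (C1 \ C2).ncard = C1.ncard :=
    Set.ncard_inter_add_ncard_diff_eq_ncard C1 C2 h1fin
  have hIeven : (C1 ∩ C2).ncard % 2 = 0 := by omega
  have hAne : (C1 \ C2).Nonempty := nonempty_of_odd _ hAmod
  -- meets
  have meetA : ∀ D : Set α, MCircuit M D → D ⊆ C1 ∪ C2 → D ≠ C2 →
      (D ∩ (C1 \ C2)).Nonempty := by
    intro D hD hDU hDne
    rw [Set.nonempty_iff_ne_empty]
    intro hemp
    have hsub : D ⊆ C2 := by
      intro x hx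
      by_contra hx2
      have hx1 : x ∈ C1 := (hDU hx).resolve_right hx2
      exact (Set.eq_empty_iff_forall_notMem.mp hemp x) ⟨hx, hx1, hx2⟩
    exact hDne (h2.eq_of_subset hD hsub)
  have meetB : ∀ D : Set α, MCircuit M D → D ⊆ C1 ∪ C2 → D ≠ C1 →
      (D ∩ (C2 \ C1)).Nonempty := by
    intro D hD hDU hDne
    rw [Set.nonempty_iff_ne_empty]
    intro hemp
    have hsub : D ⊆ C1 := by
      intro x hx
      by_contra hx1
      have hx2 : x ∈ C2 := (hDU hx).resolve_left hx1
      exact (Set.eq_empty_iff_forall_notMem.mp hemp x) ⟨hx, hx2, hx1⟩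
    exact hDne (h1.eq_of_subset hD hsub)
  -- minimality in pointwise form
  have key : ∀ D1 D2 : Set α, MCircuit M D1 → MCircuit M D2 → (D1 ∩ D2).Nonempty →
      D1.ncard % 2 = 1 → (D1 \ D2).ncard % 2 = 1 → D1 ⊆ C1 ∪ C2 → D2 ⊆ C1 ∪ C2 →
      ∀ x, x ∈ C1 ∪ C2 → x ∉ D1 → x ∈ D2 := by
    intro D1 D2 hD1 hD2 hint hodd1 hodd2 hs1 hs2 x hx hxD1
    have := hmin D1 D2 hD1 hD2 hint (Nat.odd_iff.mpr hodd1) (Nat.odd_iff.mpr hodd2)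
      (Set.union_subset hs1 hs2)
    rw [← this] at hx
    exact hx.resolve_left hxD1
  -- tricks
  have trickB : ∀ C : Set α, MCircuit M C → C ⊆ C1 ∪ C2 → C ≠ C2 → C2 \ C1 ⊆ C →
      C = symmDiff C1 C2 := by
    intro C hC hCU hCne hBC
    have hcyc : IsCycleM M (symmDiff C C2) := hbin C C2 hC h2
    have hsub : symmDiff C C2 ⊆ C1 := by
      intro x hx
      rw [Set.mem_symmDiff] at hx
      rcases hx with ⟨hxC, hxC2⟩ | ⟨hxC2, hxC⟩
      · exact (hCU hxC).resolve_right hxC2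
      · by_contra hxC1
        exact hxC (hBC ⟨hxC2, hxC1⟩)
    have hne' : (symmDiff C C2).Nonempty := by
      rw [Set.nonempty_iff_ne_empty]
      intro h
      exact hCne (symmDiff_eq_bot.mp h)
    have hZ := cycle_eq_circuit_of_subset hcyc hne' h1 hsub
    calc C = symmDiff (symmDiff C C2) C2 := (symmDiff_symmDiff_cancel_right C2 C).symm
      _ = symmDiff C1 C2 := by rw [hZ]
  have trickA : ∀ C : Set α, MCircuit M C → C ⊆ C1 ∪ C2 → C ≠ C1 → C1 \ C2 ⊆ C →
      C = symmDiff C1 C2 := by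
    intro C hC hCU hCne hAC
    have hcyc : IsCycleM M (symmDiff C C1) := hbin C C1 hC h1
    have hsub : symmDiff C C1 ⊆ C2 := by
      intro x hx
      rw [Set.mem_symmDiff] at hx
      rcases hx with ⟨hxC, hxC1⟩ | ⟨hxC1, hxC⟩
      · exact (hCU hxC).resolve_left hxC1
      · by_contra hxC2
        exact hxC (hAC ⟨hxC1, hxC2⟩)
    have hne' : (symmDiff C C1).Nonempty := by
      rw [Set.nonempty_iff_ne_empty]
      intro h
      exact hCne (symmDiff_eq_bot.mp h)
    have hZ := cycle_eq_circuit_of_subset hcyc hne' h2 hsub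
    calc C = symmDiff (symmDiff C C1) C1 := (symmDiff_symmDiff_cancel_right C1 C).symm
      _ = symmDiff C2 C1 := by rw [hZ]
      _ = symmDiff C1 C2 := symmDiff_comm C2 C1
  -- cardinality splittings for subsets of C1 ∪ C2
  have splits : ∀ C : Set α, C ⊆ C1 ∪ C2 →
      ((C ∩ C1).ncard = (C ∩ (C1 \ C2)).ncard + (C ∩ (C1 ∩ C2)).ncard ∧
       (C ∩ C2).ncard = (C ∩ (C2 \ C1)).ncard + (C ∩ (C1 ∩ C2)).ncard) ∧
      (C.ncard = (C ∩ (C1 \ C2)).ncard + (C ∩ (C2 \ C1)).ncard + (C ∩ (C1 ∩ C2)).ncard) ∧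
      (C \ C2 = C ∩ (C1 \ C2) ∧ C \ C1 = C ∩ (C2 \ C1) ∧
       C \ (symmDiff C1 C2) = C ∩ (C1 ∩ C2)) := by
    intro C hCU
    have hCfin := hfin C hCU
    have e1 : C ∩ C1 = (C ∩ (C1 \ C2)) ∪ (C ∩ (C1 ∩ C2)) := by
      ext x
      simp only [Set.mem_inter_iff, Set.mem_union, Set.mem_diff]
      tauto
    have d1 : Disjoint (C ∩ (C1 \ C2)) (C ∩ (C1 ∩ C2)) := by
      rw [Set.disjoint_left]
      rintro x ⟨-, -, h2'⟩ ⟨-, -, h2''⟩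
      exact h2' h2''
    have n1 : (C ∩ C1).ncard = (C ∩ (C1 \ C2)).ncard + (C ∩ (C1 ∩ C2)).ncard := by
      rw [e1, Set.ncard_union_eq d1 (hCfin.inter_of_left _) (hCfin.inter_of_left _)]
    have e2 : C ∩ C2 = (C ∩ (C2 \ C1)) ∪ (C ∩ (C1 ∩ C2)) := by
      ext x
      simp only [Set.mem_inter_iff, Set.mem_union, Set.mem_diff]
      tauto
    have d2 : Disjoint (C ∩ (C2 \ C1)) (C ∩ (C1 ∩ C2)) := by
      rw [Set.disjoint_left]
      rintro x ⟨-, -, h2'⟩ ⟨-, h2'', -⟩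
      exact h2' h2''
    have n2 : (C ∩ C2).ncard = (C ∩ (C2 \ C1)).ncard + (C ∩ (C1 ∩ C2)).ncard := by
      rw [e2, Set.ncard_union_eq d2 (hCfin.inter_of_left _) (hCfin.inter_of_left _)]
    have e4 : C \ C1 = C ∩ (C2 \ C1) := by
      ext x
      simp only [Set.mem_diff, Set.mem_inter_iff]
      constructor
      · rintro ⟨hxC, hx1⟩
        exact ⟨hxC, (hCU hxC).resolve_left hx1, hx1⟩
      · rintro ⟨hxC, -, hx1⟩
        exact ⟨hxC, hx1⟩
    have e3 : C \ C2 = C ∩ (C1 \ C2) := by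
      ext x
      simp only [Set.mem_diff, Set.mem_inter_iff]
      constructor
      · rintro ⟨hxC, hx2⟩
        exact ⟨hxC, (hCU hxC).resolve_right hx2, hx2⟩
      · rintro ⟨hxC, -, hx2⟩
        exact ⟨hxC, hx2⟩
    have e5 : C \ (symmDiff C1 C2) = C ∩ (C1 ∩ C2) := by
      ext x
      simp only [Set.mem_diff, Set.mem_inter_iff, Set.mem_symmDiff]
      constructor
      · rintro ⟨hxC, hx3⟩
        push_neg at hx3
        rcases hCU hxC with h | h
        · exact ⟨hxC, h, hx3.1 h⟩
        · exact ⟨hxC, hx3.2 h, h⟩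
      · rintro ⟨hxC, hx1, hx2⟩
        refine ⟨hxC, ?_⟩
        rintro (⟨-, h⟩ | ⟨-, h⟩) <;> [exact h hx2; exact h hx1]
    have ntot : C.ncard = (C ∩ (C1 \ C2)).ncard + (C ∩ (C2 \ C1)).ncard +
        (C ∩ (C1 ∩ C2)).ncard := by
      have := Set.ncard_inter_add_ncard_diff_eq_ncard C C1 hCfin
      rw [e4] at this
      omega
    exact ⟨⟨n1, n2⟩, ntot, e3, e4, e5⟩
  -- the symmetric difference is contained in the union
  have hsymmU : symmDiff C1 C2 ⊆ C1 ∪ C2 := by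
    intro x hx
    rw [Set.mem_symmDiff] at hx
    tauto
  ---------------------------------------------------------------------------
  -- (a) the symmetric difference C1 Δ C2 is a circuit
  ---------------------------------------------------------------------------
  have hC3 : MCircuit M (symmDiff C1 C2) := by
    obtain ⟨S, hS, hdisj, hun⟩ := hbin C1 C2 h1 h2
    have hmem : ∀ E ∈ S, E ⊆ symmDiff C1 C2 := by
      intro E hE
      rw [hun]
      exact fun y hy => Set.mem_biUnion hE hy
    have hEU : ∀ E ∈ S, E ⊆ C1 ∪ C2 := fun E hE => (hmem E hE).trans hsymmU
    have hEI : ∀ E ∈ S, E ∩ (C1 ∩ C2) = ∅ := by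
      intro E hE
      rw [Set.eq_empty_iff_forall_notMem]
      rintro x ⟨hxE, hx1, hx2⟩
      have := hmem E hE hxE
      rw [Set.mem_symmDiff] at this
      tauto
    have hEne1 : ∀ E ∈ S, E ≠ C1 := by
      intro E hE heq
      obtain ⟨x, hx⟩ := hne
      exact (Set.eq_empty_iff_forall_notMem.mp (hEI E hE) x) ⟨heq ▸ hx.1, hx⟩
    have hEne2 : ∀ E ∈ S, E ≠ C2 := by
      intro E hE heq
      obtain ⟨x, hx⟩ := hne
      exact (Set.eq_empty_iff_forall_notMem.mp (hEI E hE) x) ⟨heq ▸ hx.2, hx⟩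
    have hEA : ∀ E ∈ S, (E ∩ (C1 \ C2)).Nonempty :=
      fun E hE => meetA E (hS E hE) (hEU E hE) (hEne2 E hE)
    have hEB : ∀ E ∈ S, (E ∩ (C2 \ C1)).Nonempty :=
      fun E hE => meetB E (hS E hE) (hEU E hE) (hEne1 E hE)
    by_contra hnc
    have hnotsub : ∀ E ∈ S, ∃ x, x ∈ symmDiff C1 C2 ∧ x ∉ E := by
      intro E hE
      by_contra h
      push_neg at h
      exact hnc ((subset_antisymm h (hmem E hE)) ▸ hS E hE)
    have hother : ∀ E ∈ S, ∃ E' ∈ S, E' ≠ E := by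
      intro E hE
      obtain ⟨x, hx, hxE⟩ := hnotsub E hE
      rw [hun] at hx
      simp only [Set.mem_iUnion] at hx
      obtain ⟨E', hE', hxE'⟩ := hx
      exact ⟨E', hE', fun h => hxE (h ▸ hxE')⟩
    -- an element of S containing all of B (or A) gives a contradiction
    have hBcase : ∀ E ∈ S, C2 \ C1 ⊆ E → False := by
      intro E hE hBE
      obtain ⟨E', hE', hne'⟩ := hother E hE
      obtain ⟨y, hy1, hy2⟩ := hEB E' hE'
      have hdisjEE : Disjoint E E' := hdisj (by simp [hE]) (by simp [hE']) (Ne.symm hne')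
      exact (Set.disjoint_left.mp hdisjEE (hBE hy2)) hy1
    have hAcase : ∀ E ∈ S, C1 \ C2 ⊆ E → False := by
      intro E hE hAE
      obtain ⟨E', hE', hne'⟩ := hother E hE
      obtain ⟨y, hy1, hy2⟩ := hEA E' hE'
      have hdisjEE : Disjoint E E' := hdisj (by simp [hE]) (by simp [hE']) (Ne.symm hne')
      exact (Set.disjoint_left.mp hdisjEE (hAE hy2)) hy1
    -- classification: every E in S has |E ∩ A| odd and |E| even
    have htype : ∀ E ∈ S, (E ∩ (C1 \ C2)).ncard % 2 = 1 ∧ E.ncard % 2 = 0 := by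
      intro E hE
      have hEcirc := hS E hE
      obtain ⟨⟨s1, s2⟩, s3, e3, e4, e5⟩ := splits E (hEU E hE)
      have hγ : (E ∩ (C1 ∩ C2)).ncard = 0 := by rw [hEI E hE]; simp
      by_cases ha : (E ∩ (C1 \ C2)).ncard % 2 = 1
      · refine ⟨ha, ?_⟩
        by_contra hEodd
        have hEodd' : E.ncard % 2 = 1 := by omega
        have hint : (E ∩ C2).Nonempty := by
          obtain ⟨y, hy1, hy2⟩ := hEB E hE
          exact ⟨y, hy1, hy2.1⟩
        have hdiff : (E \ C2).ncard % 2 = 1 := by rw [e3]; exact ha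
        have hAE : C1 \ C2 ⊆ E := by
          intro z hz
          by_contra hzE
          exact hz.2 (key E C2 hEcirc h2 hint hEodd' hdiff (hEU E hE)
            Set.subset_union_right z (Or.inl hz.1) hzE)
        exact hAcase E hE hAE
      · exfalso
        have hint : (C1 ∩ E).Nonempty := by
          obtain ⟨y, hy1, hy2⟩ := hEA E hE
          exact ⟨y, hy2.1, hy1⟩
        have hC1E : (C1 ∩ E).ncard = (E ∩ (C1 \ C2)).ncard := by
          rw [Set.inter_comm, s1, hγ]
          omega
        have hsplitC1E : (C1 ∩ E).ncard + (C1 \ E).ncard = C1.ncard :=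
          Set.ncard_inter_add_ncard_diff_eq_ncard C1 E h1fin
        have hdiff : (C1 \ E).ncard % 2 = 1 := by omega
        have hBE : C2 \ C1 ⊆ E := fun z hz =>
          key C1 E h1 hEcirc hint hC1mod hdiff Set.subset_union_left (hEU E hE) z
            (Or.inr hz.1) hz.2
        exact hBcase E hE hBE
    -- S is nonempty; |C2| is odd
    have hSne : S.Nonempty := by
      obtain ⟨x, hx⟩ := hAne
      have hx3 : x ∈ symmDiff C1 C2 := by
        rw [Set.mem_symmDiff]
        exact Or.inl ⟨hx.1, hx.2⟩
      rw [hun] at hx3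
      simp only [Set.mem_iUnion] at hx3
      obtain ⟨E, hE, -⟩ := hx3
      exact ⟨E, hE⟩
    have hcard : ∀ X : Set α, X ⊆ symmDiff C1 C2 → X.ncard = ∑ E ∈ S, (X ∩ E).ncard := by
      intro X hX
      exact ncard_partition_sum S hdisj X (hun ▸ hX) (hfin X (hX.trans hsymmU))
    have hAsum := hcard (C1 \ C2) (by
      intro x hx
      rw [Set.mem_symmDiff]
      exact Or.inl ⟨hx.1, hx.2⟩)
    have hBsum := hcard (C2 \ C1) (by
      intro x hx
      rw [Set.mem_symmDiff]
      exact Or.inr ⟨hx.1, hx.2⟩)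
    have hAmods : (∑ E ∈ S, ((C1 \ C2) ∩ E).ncard) % 2
        = (S.filter (fun E => ((C1 \ C2) ∩ E).ncard % 2 = 1)).card % 2 := sum_mod_two S _
    have hBmods : (∑ E ∈ S, ((C2 \ C1) ∩ E).ncard) % 2
        = (S.filter (fun E => ((C2 \ C1) ∩ E).ncard % 2 = 1)).card % 2 := sum_mod_two S _
    have hfilterA : S.filter (fun E => ((C1 \ C2) ∩ E).ncard % 2 = 1) = S := by
      apply Finset.filter_true_of_mem
      intro E hE
      rw [Set.inter_comm]
      exact (htype E hE).1
    have hfilterB : S.filter (fun E => ((C2 \ C1) ∩ E).ncard % 2 = 1) = S := by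
      apply Finset.filter_true_of_mem
      intro E hE
      obtain ⟨⟨s1, s2⟩, s3, -, -, -⟩ := splits E (hEU E hE)
      have hγ : (E ∩ (C1 ∩ C2)).ncard = 0 := by rw [hEI E hE]; simp
      have := htype E hE
      rw [Set.inter_comm]
      omega
    rw [hfilterA] at hAmods
    rw [hfilterB] at hBmods
    have hScard : S.card % 2 = 1 := by omega
    have hBodd : (C2 \ C1).ncard % 2 = 1 := by omega
    have hC2mod : C2.ncard % 2 = 1 := by
      have := Set.ncard_inter_add_ncard_diff_eq_ncard C2 C1 h2fin
      have hcomm : (C2 ∩ C1).ncard = (C1 ∩ C2).ncard := by rw [Set.inter_comm]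
      omega
    -- pick D in S and run the counting argument on C1 Δ D
    obtain ⟨D, hD⟩ := hSne
    have hDcirc := hS D hD
    have hDU := hEU D hD
    have htD := htype D hD
    obtain ⟨⟨sD1, sD2⟩, sD3, eD3, eD4, eD5⟩ := splits D hDU
    have hγD : (D ∩ (C1 ∩ C2)).ncard = 0 := by rw [hEI D hD]; simp
    have hbD : (D ∩ (C2 \ C1)).ncard % 2 = 1 := by omega
    have hDAne : (D ∩ (C1 \ C2)).Nonempty := hEA D hD
    -- the three parts of C1 Δ D
    have hZ1eq : ∀ x, x ∈ symmDiff C1 D ↔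
        (x ∈ (C1 \ C2) \ D ∨ x ∈ C1 ∩ C2 ∨ x ∈ D ∩ (C2 \ C1)) := by
      intro x
      simp only [Set.mem_symmDiff, Set.mem_union, Set.mem_diff, Set.mem_inter_iff]
      constructor
      · rintro (⟨hx1, hxD⟩ | ⟨hxD, hx1⟩)
        · by_cases hx2 : x ∈ C2
          · exact Or.inr (Or.inl ⟨hx1, hx2⟩)
          · exact Or.inl ⟨⟨hx1, hx2⟩, hxD⟩
        · have := hmem D hD hxD
          rw [Set.mem_symmDiff] at this
          rcases this with ⟨h1', h2'⟩ | ⟨h2', h1'⟩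
          · exact absurd h1' hx1
          · exact Or.inr (Or.inr ⟨hxD, h2', hx1⟩)
      · rintro (⟨⟨hx1, hx2⟩, hxD⟩ | ⟨hx1, hx2⟩ | ⟨hxD, hx2, hx1⟩)
        · exact Or.inl ⟨hx1, hxD⟩
        · have hxD : x ∉ D := fun h =>
            (Set.eq_empty_iff_forall_notMem.mp (hEI D hD) x) ⟨h, hx1, hx2⟩
          exact Or.inl ⟨hx1, hxD⟩
        · exact Or.inr ⟨hxD, hx1⟩
    have hZ1U : symmDiff C1 D ⊆ C1 ∪ C2 := by
      intro x hx
      rw [Set.mem_symmDiff] at hx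
      rcases hx with ⟨h, -⟩ | ⟨h, -⟩
      · exact Or.inl h
      · exact hDU h
    obtain ⟨T, hT, hTdisj, hTun⟩ := hbin C1 D h1 hDcirc
    have hTmem : ∀ H ∈ T, H ⊆ symmDiff C1 D := by
      intro H hH
      rw [hTun]
      exact fun y hy => Set.mem_biUnion hH hy
    have hTU : ∀ H ∈ T, H ⊆ C1 ∪ C2 := fun H hH => (hTmem H hH).trans hZ1U
    -- classification of circuits in T
    have hHtype : ∀ H ∈ T,
        ((H ∩ ((C1 \ C2) \ D)).ncard % 2 = 1 ↔ H.ncard % 2 = 0) ∧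
        ((H ∩ (D ∩ (C2 \ C1))).ncard % 2 = 1 ↔ H.ncard % 2 = 0) := by
      intro H hH
      have hHcirc := hT H hH
      have hHZ := hTmem H hH
      have hHU := hTU H hH
      have hHfin := hfin H hHU
      -- identities
      have eH1 : H ∩ C1 = (H ∩ ((C1 \ C2) \ D)) ∪ (H ∩ (C1 ∩ C2)) := by
        ext x
        simp only [Set.mem_inter_iff, Set.mem_union, Set.mem_diff]
        constructor
        · rintro ⟨hxH, hx1⟩
          rcases (hZ1eq x).mp (hHZ hxH) with h | h | h
          · exact Or.inl ⟨hxH, h⟩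
          · exact Or.inr ⟨hxH, h⟩
          · exact absurd hx1 h.2.2
        · rintro (⟨hxH, ⟨hx1, -⟩, -⟩ | ⟨hxH, hx1, -⟩) <;> exact ⟨hxH, hx1⟩
      have dH1 : Disjoint (H ∩ ((C1 \ C2) \ D)) (H ∩ (C1 ∩ C2)) := by
        rw [Set.disjoint_left]
        rintro x ⟨-, ⟨-, h2'⟩, -⟩ ⟨-, -, h2''⟩
        exact h2' h2''
      have nH1 : (H ∩ C1).ncard =
          (H ∩ ((C1 \ C2) \ D)).ncard + (H ∩ (C1 ∩ C2)).ncard := by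
        rw [eH1, Set.ncard_union_eq dH1 (hHfin.inter_of_left _) (hHfin.inter_of_left _)]
      have eH2 : H ∩ C2 = (H ∩ (C1 ∩ C2)) ∪ (H ∩ (D ∩ (C2 \ C1))) := by
        ext x
        simp only [Set.mem_inter_iff, Set.mem_union, Set.mem_diff]
        constructor
        · rintro ⟨hxH, hx2⟩
          rcases (hZ1eq x).mp (hHZ hxH) with h | h | h
          · exact absurd hx2 h.1.2
          · exact Or.inl ⟨hxH, h⟩
          · exact Or.inr ⟨hxH, h⟩
        · rintro (⟨hxH, -, hx2⟩ | ⟨hxH, -, hx2, -⟩) <;> exact ⟨hxH, hx2⟩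
      have dH2 : Disjoint (H ∩ (C1 ∩ C2)) (H ∩ (D ∩ (C2 \ C1))) := by
        rw [Set.disjoint_left]
        rintro x ⟨-, h1', -⟩ ⟨-, -, -, h2''⟩
        exact h2'' h1'
      have nH2 : (H ∩ C2).ncard =
          (H ∩ (C1 ∩ C2)).ncard + (H ∩ (D ∩ (C2 \ C1))).ncard := by
        rw [eH2, Set.ncard_union_eq dH2 (hHfin.inter_of_left _) (hHfin.inter_of_left _)]
      have eH3 : H \ C2 = H ∩ ((C1 \ C2) \ D) := by
        ext x
        simp only [Set.mem_diff, Set.mem_inter_iff]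
        constructor
        · rintro ⟨hxH, hx2⟩
          rcases (hZ1eq x).mp (hHZ hxH) with h | h | h
          · exact ⟨hxH, h⟩
          · exact absurd h.2 hx2
          · exact absurd h.2.1 hx2
        · rintro ⟨hxH, ⟨-, hx2⟩, -⟩
          exact ⟨hxH, hx2⟩
      have nHtot : H.ncard = (H ∩ ((C1 \ C2) \ D)).ncard + (H ∩ (C1 ∩ C2)).ncard +
          (H ∩ (D ∩ (C2 \ C1))).ncard := by
        have hsp := Set.ncard_inter_add_ncard_diff_eq_ncard H C2 hHfin
        rw [eH3] at hsp
        omega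
      -- H meets C1
      have hHC1ne : (C1 ∩ H).Nonempty := by
        rw [Set.nonempty_iff_ne_empty]
        intro hemp
        have hemp' : ∀ y, y ∈ C1 → y ∉ H := fun y h1' h2' =>
          (Set.eq_empty_iff_forall_notMem.mp hemp y) ⟨h1', h2'⟩
        have hsubD : H ⊆ D := by
          intro x hx
          rcases (hZ1eq x).mp (hHZ hx) with h | h | h
          · exact absurd hx (hemp' x h.1.1)
          · exact absurd hx (hemp' x h.1)
          · exact h.1
        have hHD : H = D := hDcirc.eq_of_subset hHcirc hsubD
        obtain ⟨y, hy1, hy2⟩ := hDAne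
        have hyH : y ∈ H := hHD ▸ hy1
        have := (hZ1eq y).mp (hHZ hyH)
        rcases this with h | h | h
        · exact h.2 hy1
        · exact hy2.2 h.2
        · exact hy2.2 h.2.1
      -- main case analysis
      by_cases hx : (H ∩ C1).ncard % 2 = 0
      · exfalso
        have hC1H : (C1 ∩ H).ncard % 2 = 0 := by
          rw [Set.inter_comm]; exact hx
        have hsplitC1H : (C1 ∩ H).ncard + (C1 \ H).ncard = C1.ncard :=
          Set.ncard_inter_add_ncard_diff_eq_ncard C1 H h1fin
        have hdiff : (C1 \ H).ncard % 2 = 1 := by omega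
        have hBH : C2 \ C1 ⊆ H := fun z hz =>
          key C1 H h1 hHcirc hHC1ne hC1mod hdiff Set.subset_union_left hHU z
            (Or.inr hz.1) hz.2
        -- B ⊆ H and H ∩ B ⊆ D, so B ⊆ D
        have hBD : C2 \ C1 ⊆ D := by
          intro z hz
          have hzH : z ∈ H := hBH hz
          rcases (hZ1eq z).mp (hHZ hzH) with h | h | h
          · exact absurd hz.1 h.1.2
          · exact absurd h.1 hz.2
          · exact h.1
        obtain ⟨E', hE', hne'⟩ := hother D hD
        obtain ⟨y, hy1, hy2⟩ := hEB E' hE'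
        have hdisjEE : Disjoint D E' := hdisj (by simp [hD]) (by simp [hE']) (Ne.symm hne')
        exact (Set.disjoint_left.mp hdisjEE (hBD hy2)) hy1
      · by_cases hodd : H.ncard % 2 = 1
        · -- H odd
          constructor
          · constructor
            · intro ha
              exfalso
              -- H odd with |H ∩ P1| odd : pair (H, C2) forces A ⊆ H
              have hint : (H ∩ C2).Nonempty := by
                rw [Set.nonempty_iff_ne_empty]
                intro hemp
                have hsubC1 : H ⊆ C1 := by
                  intro x hx'
                  by_contra hx1
                  have hx2 : x ∈ C2 := (hHU hx').resolve_left hx1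
                  exact (Set.eq_empty_iff_forall_notMem.mp hemp x) ⟨hx', hx2⟩
                have hHC1 : H = C1 := h1.eq_of_subset hHcirc hsubC1
                obtain ⟨w, hw⟩ := hne
                exact (Set.eq_empty_iff_forall_notMem.mp hemp w) ⟨hHC1 ▸ hw.1, hw.2⟩
              have hdiff : (H \ C2).ncard % 2 = 1 := by rw [eH3]; exact ha
              have hAH : C1 \ C2 ⊆ H := by
                intro z hz
                by_contra hzH
                exact hz.2 (key H C2 hHcirc h2 hint hodd hdiff hHU
                  Set.subset_union_right z (Or.inl hz.1) hzH)
              -- then A misses D : contradiction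
              obtain ⟨y, hy1, hy2⟩ := hDAne
              have hyH : y ∈ H := hAH hy2
              rcases (hZ1eq y).mp (hHZ hyH) with h | h | h
              · exact h.2 hy1
              · exact hy2.2 h.2
              · exact hy2.2 h.2.1
            · intro h0
              omega
          · constructor
            · intro hb
              exfalso
              omega
            · intro h0
              omega
        · -- H even
          have hHeven : H.ncard % 2 = 0 := by omega
          have hxodd : (H ∩ C1).ncard % 2 = 1 := by omega
          have hiH : (H ∩ (C1 ∩ C2)).ncard % 2 = 0 := by
            by_contra hiodd
            have hiodd' : (H ∩ (C1 ∩ C2)).ncard % 2 = 1 := by omega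
            have hint : (C2 ∩ H).Nonempty := by
              obtain ⟨y, hy1, hy2, hy3⟩ := nonempty_of_odd _ hiodd'
              exact ⟨y, hy3, hy1⟩
            have hsplitC2H : (C2 ∩ H).ncard + (C2 \ H).ncard = C2.ncard :=
              Set.ncard_inter_add_ncard_diff_eq_ncard C2 H h2fin
            have hC2Hcomm : (C2 ∩ H).ncard = (H ∩ C2).ncard := by rw [Set.inter_comm]
            have hdiff : (C2 \ H).ncard % 2 = 1 := by omega
            have hAH : C1 \ C2 ⊆ H := fun z hz =>
              key C2 H h2 hHcirc hint hC2mod hdiff Set.subset_union_right hHU z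
                (Or.inl hz.1) hz.2
            obtain ⟨y, hy1, hy2⟩ := hDAne
            have hyH : y ∈ H := hAH hy2
            rcases (hZ1eq y).mp (hHZ hyH) with h | h | h
            · exact h.2 hy1
            · exact hy2.2 h.2
            · exact hy2.2 h.2.1
          constructor
          · constructor
            · intro _; exact hHeven
            · intro _; omega
          · constructor
            · intro _; exact hHeven
            · intro _; omega
    -- counting contradiction
    have hP1sub : (C1 \ C2) \ D ⊆ symmDiff C1 D := by
      intro x hx
      exact (hZ1eq x).mpr (Or.inl hx)
    have hP3sub : D ∩ (C2 \ C1) ⊆ symmDiff C1 D := by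
      intro x hx
      exact (hZ1eq x).mpr (Or.inr (Or.inr hx))
    have hP1sum := ncard_partition_sum T hTdisj ((C1 \ C2) \ D)
      (hTun ▸ hP1sub) (hfin _ (hP1sub.trans hZ1U))
    have hP3sum := ncard_partition_sum T hTdisj (D ∩ (C2 \ C1))
      (hTun ▸ hP3sub) (hfin _ (hP3sub.trans hZ1U))
    have hP1mods : (∑ H ∈ T, (((C1 \ C2) \ D) ∩ H).ncard) % 2
        = (T.filter (fun H => (((C1 \ C2) \ D) ∩ H).ncard % 2 = 1)).card % 2 :=
      sum_mod_two T _
    have hP3mods : (∑ H ∈ T, ((D ∩ (C2 \ C1)) ∩ H).ncard) % 2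
        = (T.filter (fun H => ((D ∩ (C2 \ C1)) ∩ H).ncard % 2 = 1)).card % 2 :=
      sum_mod_two T _
    have hfilter1 : T.filter (fun H => (((C1 \ C2) \ D) ∩ H).ncard % 2 = 1) =
        T.filter (fun H => H.ncard % 2 = 0) := by
      apply Finset.filter_congr
      intro H hH
      rw [Set.inter_comm]
      exact (hHtype H hH).1
    have hfilter3 : T.filter (fun H => ((D ∩ (C2 \ C1)) ∩ H).ncard % 2 = 1) =
        T.filter (fun H => H.ncard % 2 = 0) := by
      apply Finset.filter_congr
      intro H hH
      rw [Set.inter_comm]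
      exact (hHtype H hH).2
    rw [hfilter1] at hP1mods
    rw [hfilter3] at hP3mods
    -- |P1| is even, |P3| is odd
    have hP1even : ((C1 \ C2) \ D).ncard % 2 = 0 := by
      have hsp := Set.ncard_inter_add_ncard_diff_eq_ncard (C1 \ C2) D
        (hfin _ (Set.diff_subset.trans Set.subset_union_left))
      have hcomm : ((C1 \ C2) ∩ D).ncard = (D ∩ (C1 \ C2)).ncard := by rw [Set.inter_comm]
      have := htD.1
      omega
    omega
  ---------------------------------------------------------------------------
  -- (b1) every odd circuit inside C1 ∪ C2 is C1, C2 or C1 Δ C2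
  ---------------------------------------------------------------------------
  have hb1 : ∀ C : Set α, MCircuit M C → C ⊆ C1 ∪ C2 → C.ncard % 2 = 1 →
      C = C1 ∨ C = C2 ∨ C = symmDiff C1 C2 := by
    intro C hC hCU hCodd
    by_cases hc1 : C = C1
    · exact Or.inl hc1
    by_cases hc2 : C = C2
    · exact Or.inr (Or.inl hc2)
    obtain ⟨⟨s1, s2⟩, s3, e3, e4, e5⟩ := splits C hCU
    have hCA : (C ∩ (C1 \ C2)).Nonempty := meetA C hC hCU hc2
    have hCB : (C ∩ (C2 \ C1)).Nonempty := meetB C hC hCU hc1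
    by_cases hx : (C ∩ C1).ncard % 2 = 0
    · -- pair (C1, C) : B ⊆ C
      have hint : (C1 ∩ C).Nonempty := by
        obtain ⟨y, hy1, hy2⟩ := hCA
        exact ⟨y, hy2.1, hy1⟩
      have hsp : (C1 ∩ C).ncard + (C1 \ C).ncard = C1.ncard :=
        Set.ncard_inter_add_ncard_diff_eq_ncard C1 C h1fin
      have hcomm : (C1 ∩ C).ncard = (C ∩ C1).ncard := by rw [Set.inter_comm]
      have hdiff : (C1 \ C).ncard % 2 = 1 := by omega
      have hBC : C2 \ C1 ⊆ C := fun z hz =>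
        key C1 C h1 hC hint hC1mod hdiff Set.subset_union_left hCU z (Or.inr hz.1) hz.2
      exact Or.inr (Or.inr (trickB C hC hCU hc2 hBC))
    · by_cases ha : (C ∩ (C1 \ C2)).ncard % 2 = 1
      · -- pair (C, C2) : A ⊆ C
        have hint : (C ∩ C2).Nonempty := by
          obtain ⟨y, hy1, hy2⟩ := hCB
          exact ⟨y, hy1, hy2.1⟩
        have hdiff : (C \ C2).ncard % 2 = 1 := by rw [e3]; exact ha
        have hAC : C1 \ C2 ⊆ C := by
          intro z hz
          by_contra hzC
          exact hz.2 (key C C2 hC h2 hint hCodd hdiff hCU Set.subset_union_right z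
            (Or.inl hz.1) hzC)
        exact Or.inr (Or.inr (trickA C hC hCU hc1 hAC))
      · -- |C ∩ I| odd : pair (C, C1 Δ C2) forces I ⊆ C, contradiction
        exfalso
        have hγodd : (C ∩ (C1 ∩ C2)).ncard % 2 = 1 := by omega
        have hint : (C ∩ symmDiff C1 C2).Nonempty := by
          obtain ⟨y, hy1, hy2⟩ := hCA
          refine ⟨y, hy1, ?_⟩
          rw [Set.mem_symmDiff]
          exact Or.inl ⟨hy2.1, hy2.2⟩
        have hdiff : (C \ symmDiff C1 C2).ncard % 2 = 1 := by rw [e5]; exact hγodd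
        have hIC : C1 ∩ C2 ⊆ C := by
          intro z hz
          by_contra hzC
          have := key C (symmDiff C1 C2) hC hC3 hint hCodd hdiff hCU hsymmU z
            (Or.inl hz.1) hzC
          rw [Set.mem_symmDiff] at this
          rcases this with ⟨-, h⟩ | ⟨-, h⟩
          · exact h hz.2
          · exact h hz.1
        have hCI : C ∩ (C1 ∩ C2) = C1 ∩ C2 :=
          subset_antisymm Set.inter_subset_right (fun z hz => ⟨hIC hz, hz⟩)
        rw [hCI] at hγodd
        omega
  ---------------------------------------------------------------------------
  -- (b2) every circuit inside C1 ∪ C2 is C1, C2 or C1 Δ C2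
  ---------------------------------------------------------------------------
  have hball : ∀ C : Set α, MCircuit M C → C ⊆ C1 ∪ C2 →
      C = C1 ∨ C = C2 ∨ C = symmDiff C1 C2 := by
    intro C hC hCU
    by_cases hCodd : C.ncard % 2 = 1
    · exact hb1 C hC hCU hCodd
    by_cases hc1 : C = C1
    · exact Or.inl hc1
    by_cases hc2 : C = C2
    · exact Or.inr (Or.inl hc2)
    obtain ⟨⟨s1, s2⟩, s3, e3, e4, e5⟩ := splits C hCU
    have hCA : (C ∩ (C1 \ C2)).Nonempty := meetA C hC hCU hc2
    have hCB : (C ∩ (C2 \ C1)).Nonempty := meetB C hC hCU hc1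
    by_cases hx : (C ∩ C1).ncard % 2 = 0
    · -- pair (C1, C) : B ⊆ C
      have hint : (C1 ∩ C).Nonempty := by
        obtain ⟨y, hy1, hy2⟩ := hCA
        exact ⟨y, hy2.1, hy1⟩
      have hsp : (C1 ∩ C).ncard + (C1 \ C).ncard = C1.ncard :=
        Set.ncard_inter_add_ncard_diff_eq_ncard C1 C h1fin
      have hcomm : (C1 ∩ C).ncard = (C ∩ C1).ncard := by rw [Set.inter_comm]
      have hdiff : (C1 \ C).ncard % 2 = 1 := by omega
      have hBC : C2 \ C1 ⊆ C := fun z hz =>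
        key C1 C h1 hC hint hC1mod hdiff Set.subset_union_left hCU z (Or.inr hz.1) hz.2
      exact Or.inr (Or.inr (trickB C hC hCU hc2 hBC))
    · -- |C ∩ C1| odd and |C| even : use an odd circuit inside C Δ C1
      have hxodd : (C ∩ C1).ncard % 2 = 1 := by omega
      obtain ⟨T, hT, hTdisj, hTun⟩ := hbin C C1 hC h1
      have hZU : symmDiff C C1 ⊆ C1 ∪ C2 := by
        intro x hx'
        rw [Set.mem_symmDiff] at hx'
        rcases hx' with ⟨h, -⟩ | ⟨h, -⟩
        · exact hCU h
        · exact Or.inl h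
      have hTmem : ∀ H ∈ T, H ⊆ symmDiff C C1 := by
        intro H hH
        rw [hTun]
        exact fun y hy => Set.mem_biUnion hH hy
      -- |C Δ C1| is odd
      have hZodd : (symmDiff C C1).ncard % 2 = 1 := by
        have hd : Disjoint (C \ C1) (C1 \ C) := by
          rw [Set.disjoint_left]
          rintro z ⟨-, h1'⟩ ⟨h2', -⟩
          exact h1' h2'
        have hn : (symmDiff C C1).ncard = (C \ C1).ncard + (C1 \ C).ncard := by
          rw [Set.symmDiff_def, Set.ncard_union_eq hd
            (hfin C hCU).diff h1fin.diff]
        have hsp1 : (C ∩ C1).ncard + (C \ C1).ncard = C.ncard :=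
          Set.ncard_inter_add_ncard_diff_eq_ncard C C1 (hfin C hCU)
        have hsp2 : (C1 ∩ C).ncard + (C1 \ C).ncard = C1.ncard :=
          Set.ncard_inter_add_ncard_diff_eq_ncard C1 C h1fin
        have hcomm : (C1 ∩ C).ncard = (C ∩ C1).ncard := by rw [Set.inter_comm]
        omega
      -- total cardinality is the sum
      have hZsum : (symmDiff C C1).ncard = ∑ H ∈ T, ((symmDiff C C1) ∩ H).ncard :=
        ncard_partition_sum T hTdisj _ (hTun ▸ subset_rfl) (hfin _ hZU)
      have hterm : ∀ H ∈ T, ((symmDiff C C1) ∩ H).ncard = H.ncard := by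
        intro H hH
        rw [Set.inter_eq_self_of_subset_right (hTmem H hH)]
      have hZsum' : (symmDiff C C1).ncard = ∑ H ∈ T, H.ncard :=
        hZsum.trans (Finset.sum_congr rfl hterm)
      have hmods : (∑ H ∈ T, H.ncard) % 2
          = (T.filter (fun H => H.ncard % 2 = 1)).card % 2 := sum_mod_two T _
      have hfilne : (T.filter (fun H => H.ncard % 2 = 1)).Nonempty := by
        rw [Finset.nonempty_iff_ne_empty]
        intro hempty
        rw [hempty, Finset.card_empty] at hmods
        omega
      obtain ⟨F, hF⟩ := hfilne
      rw [Finset.mem_filter] at hF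
      obtain ⟨hFT, hFodd⟩ := hF
      have hFcirc := hT F hFT
      have hFZ := hTmem F hFT
      have hFU : F ⊆ C1 ∪ C2 := hFZ.trans hZU
      rcases hb1 F hFcirc hFU hFodd with hFeq | hFeq | hFeq
      · -- F = C1 : but C ∩ C1 ≠ ∅
        exfalso
        rw [hFeq] at hFZ
        obtain ⟨y, hy1, hy2⟩ := nonempty_of_odd _ hxodd
        have := hFZ hy2
        rw [Set.mem_symmDiff] at this
        tauto
      · -- F = C2 : then B ⊆ C
        rw [hFeq] at hFZ
        have hBC : C2 \ C1 ⊆ C := by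
          intro z hz
          have := hFZ hz.1
          rw [Set.mem_symmDiff] at this
          rcases this with ⟨h, -⟩ | ⟨h, -⟩
          · exact h
          · exact absurd h hz.2
        exact Or.inr (Or.inr (trickB C hC hCU hc2 hBC))
      · -- F = C1 Δ C2 : but C ∩ A ≠ ∅
        exfalso
        rw [hFeq] at hFZ
        obtain ⟨y, hy1, hy2⟩ := hCA
        have hyF : y ∈ symmDiff C1 C2 := by
          rw [Set.mem_symmDiff]
          exact Or.inl ⟨hy2.1, hy2.2⟩
        have := hFZ hyF
        rw [Set.mem_symmDiff] at this
        rcases this with ⟨-, h⟩ | ⟨-, h⟩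
        · exact h hy2.1
        · exact h hy1
  have hmain : MCircuit M (symmDiff C1 C2) ∧
      (∀ C : Set α, MCircuit M C → C ⊆ C1 ∪ C2 →
        C = C1 ∨ C = C2 ∨ C = symmDiff C1 C2) := ⟨hC3, hball⟩
  intro C
  rw [hrestr C]
  constructor
  · rintro ⟨hC, hCU⟩
    exact hmain.2 C hC hCU
  · rintro (rfl | rfl | rfl)
    · exact ⟨h1, Set.subset_union_left⟩
    · exact ⟨h2, Set.subset_union_right⟩
    · refine ⟨hmain.1, ?_⟩
      intro x hx
      rw [Set.mem_symmDiff] at hx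
      rcases hx with ⟨h, -⟩ | ⟨h, -⟩
      · exact Or.inl h
      · exact Or.inr h
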